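/- The vector field V(z) = i(f z² + ω z + conj(f)) on the closed unit disc is tangent to every hyperbolic Killing direction in the sense that its flow preserves the cross-ratio quantity: for solutions z₁(t), z₂(t) of ż = i(f(t) z² + ω z + conj(f(t))) with values in the open unit disc, the pseudo-hyperbolic distance |z₁(t) - z₂(t)|/|1 - conj(z₁(t)) z₂(t)| is constant in t. -/

import Mathlib

open Complex

theorem swarm_preserves_pseudoHyperbolic_distance (f : ℝ → ℂ) (hf : Continuous f) (ω : ℝ)
    (z₁ z₂ : ℝ → ℂ) (hz₁ : ∀ t, ‖z₁ t‖ < 1) (hz₂ : ∀ t, ‖z₂ t‖ < 1)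
    (hd₁ : ∀ t, HasDerivAt z₁
      (Complex.I * (f t * z₁ t ^ 2 + (ω : ℂ) * z₁ t + (starRingEnd ℂ) (f t))) t)
    (hd₂ : ∀ t, HasDerivAt z₂
      (Complex.I * (f t * z₂ t ^ 2 + (ω : ℂ) * z₂ t + (starRingEnd ℂ) (f t))) t)
    (ρ : ℝ → ℝ)
    (hρ : ∀ t, ρ t = ‖z₁ t - z₂ t‖ ^ 2 /
      ‖1 - (starRingEnd ℂ) (z₁ t) * z₂ t‖ ^ 2) :
    ∀ t : ℝ, ρ t = ρ 0 := by
  set u : ℝ → ℂ := fun t => z₁ t - z₂ t with hu_def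
  set v : ℝ → ℂ := fun t => 1 - star (z₁ t) * z₂ t with hv_def
  have hv0 : ∀ t, v t ≠ 0 := by
    intro t h
    have h1 : ‖star (z₁ t) * z₂ t‖ < 1 := by
      rw [norm_mul]
      have := mul_le_mul_of_nonneg_left (hz₂ t).le (norm_nonneg (star (z₁ t)))
      have h2 : ‖star (z₁ t)‖ < 1 := by simpa using hz₁ t
      nlinarith [norm_nonneg (star (z₁ t))]
    have heq : star (z₁ t) * z₂ t = 1 := by
      have := sub_eq_zero.mp h
      exact this.symm
    rw [heq] at h1
    simp at h1
  set g : ℝ → ℂ := fun t => (u t * star (u t)) / (v t * star (v t)) with hg_def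
  have hg' : ∀ t, HasDerivAt g 0 t := by
    intro t
    have hu : HasDerivAt u
        (Complex.I * (f t * z₁ t ^ 2 + (ω : ℂ) * z₁ t + (starRingEnd ℂ) (f t)) -
         Complex.I * (f t * z₂ t ^ 2 + (ω : ℂ) * z₂ t + (starRingEnd ℂ) (f t))) t :=
      (hd₁ t).sub (hd₂ t)
    have hv : HasDerivAt v
        (-(star (Complex.I * (f t * z₁ t ^ 2 + (ω : ℂ) * z₁ t + (starRingEnd ℂ) (f t))) * z₂ t +
          star (z₁ t) * (Complex.I * (f t * z₂ t ^ 2 + (ω : ℂ) * z₂ t + (starRingEnd ℂ) (f t))))) t := by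
      have hX := (hasDerivAt_const t (1 : ℂ)).fun_sub (((hd₁ t).star).fun_mul (hd₂ t))
      simp at hX ⊢
      exact hX
    have hA := hu.fun_mul hu.star
    have hB := hv.fun_mul hv.star
    have hBne : v t * star (v t) ≠ 0 := mul_ne_zero (hv0 t) (star_ne_zero.mpr (hv0 t))
    have h := hA.fun_div hB hBne
    convert h using 1
    case e'_4 => rfl
    rw [eq_div_iff (pow_ne_zero 2 hBne)]
    simp only [hu_def, hv_def, star_mul, star_add, star_sub, star_one, star_mul',
      Complex.star_def, map_mul, map_add, map_sub, map_one, map_pow, Complex.conj_I,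
      Complex.conj_conj, Complex.conj_ofReal, map_neg, star_neg]
    ring
  have hconst : ∀ t, g t = g 0 := by
    intro t
    exact is_const_of_deriv_eq_zero (fun s => (hg' s).differentiableAt)
      (fun s => (hg' s).deriv) t 0
  have hgre : ∀ t, g t = ((ρ t : ℝ) : ℂ) := by
    intro t
    rw [hρ t, hg_def]
    simp only [hu_def, hv_def]
    rw [Complex.ofReal_div]
    congr 1
    · rw [Complex.star_def, Complex.mul_conj, Complex.ofReal_pow, ← Complex.sq_norm,
        Complex.ofReal_pow]
    · rw [Complex.star_def, Complex.mul_conj, ← Complex.sq_norm, Complex.ofReal_pow]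
  intro t
  have := hconst t
  rw [hgre t, hgre 0] at this
  exact_mod_cast this
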